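/- For all real numbers α with 0 ≤ α < 2 and every constant C > 0 there exists a constant C' > 0 such that the following holds: for every finite simple graph G, if for every pair of distinct vertices u, v of G and every pair of disjoint vertex sets U ⊆ N(u)\{v} and V ⊆ N(v)\{u} the number of edges of G with one endpoint in U and the other endpoint in V is at most C·(|U|+|V|)^{2−α}, then the number of edges of G is at most C'·|V(G)|^{2−α/(α+1)}. -/

import Mathlib

set_option linter.unusedSectionVars false
set_option linter.unusedVariables false
set_option linter.unnecessarySeqFocus false
set_option linter.unusedTactic false
set_option maxHeartbeats 1000000
set_option autoImplicit false

/-- The number of edges of `G` with one endpoint in `U` and the other endpoint in `W`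
(counted via ordered pairs; for disjoint `U`, `W` each such edge is counted once). -/
noncomputable def edgesBetween {V : Type*} (G : SimpleGraph V) (U W : Set V) : ℕ :=
  {p : V × V | p.1 ∈ U ∧ p.2 ∈ W ∧ G.Adj p.1 p.2}.ncard

namespace Stmt0Aux

open Finset

variable {V : Type} [Fintype V] [DecidableEq V] (G : SimpleGraph V) [DecidableRel G.Adj]
variable {α C : ℝ}


def nb (U : Finset V) (v : V) : Finset V := U.filter (fun u => G.Adj v u)

def dg (U : Finset V) (v : V) : ℕ := (nb G U v).card

def eb (X Y : Finset V) : ℕ := ((X ×ˢ Y).filter (fun p => G.Adj p.1 p.2)).card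

lemma mem_nb {U : Finset V} {v u : V} : u ∈ nb G U v ↔ u ∈ U ∧ G.Adj v u := by
  simp [nb]

lemma nb_subset (U : Finset V) (v : V) : nb G U v ⊆ U := filter_subset _ _

lemma nb_comm (U : Finset V) (u : V) :
    U.filter (fun a => G.Adj a u) = nb G U u := by
  apply Finset.filter_congr
  intro a _
  simp [G.adj_comm]

lemma sum_nb (U : Finset V) (f : V → ℝ) :
    ∑ a ∈ U, ∑ u ∈ nb G U a, f u = ∑ u ∈ U, (dg G U u : ℝ) * f u := by
  have h1 : ∀ a ∈ U, ∑ u ∈ nb G U a, f u = ∑ u ∈ U, if G.Adj a u then f u else 0 := by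
    intro a _
    rw [nb, Finset.sum_filter]
  rw [Finset.sum_congr rfl h1, Finset.sum_comm]
  apply Finset.sum_congr rfl
  intro u hu
  rw [← Finset.sum_filter, nb_comm]
  rw [Finset.sum_const, dg, nsmul_eq_mul]

lemma dg_erase (U : Finset V) (v u : V) (hu : u ≠ v) :
    dg G U u = dg G (U.erase v) u + if G.Adj u v ∧ v ∈ U then 1 else 0 := by
  unfold dg nb
  by_cases hv : v ∈ U
  · by_cases ha : G.Adj u v
    · simp only [ha, hv, and_self, if_true]
      have : U.filter (fun x => G.Adj u x) = insert v ((U.erase v).filter (fun x => G.Adj u x)) := by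
        ext x
        simp only [Finset.mem_filter, Finset.mem_insert, Finset.mem_erase]
        constructor
        · rintro ⟨hxU, hadj⟩
          by_cases hxv : x = v
          · left; exact hxv
          · right; exact ⟨⟨hxv, hxU⟩, hadj⟩
        · rintro (rfl | ⟨⟨_, hxU⟩, hadj⟩)
          · exact ⟨hv, ha⟩
          · exact ⟨hxU, hadj⟩
      rw [this, Finset.card_insert_of_notMem (by simp)]
    · simp only [ha, false_and, if_false, add_zero]
      congr 1
      ext x
      simp only [Finset.mem_filter, Finset.mem_erase]
      constructor
      · rintro ⟨hxU, hadj⟩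
        refine ⟨⟨?_, hxU⟩, hadj⟩
        rintro rfl; exact ha hadj
      · rintro ⟨⟨_, hxU⟩, hadj⟩; exact ⟨hxU, hadj⟩
  · simp [hv, Finset.erase_eq_of_notMem hv]

lemma sum_dg_erase (U : Finset V) (v : V) (hv : v ∈ U) :
    ∑ u ∈ U, dg G U u = (∑ u ∈ U.erase v, dg G (U.erase v) u) + 2 * dg G U v := by
  have h0 : ∑ u ∈ U, dg G U u = dg G U v + ∑ u ∈ U.erase v, dg G U u :=
    (Finset.add_sum_erase U _ hv).symm
  have h1 : ∑ u ∈ U.erase v, dg G U u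
      = ∑ u ∈ U.erase v, (dg G (U.erase v) u + if G.Adj u v ∧ v ∈ U then 1 else 0) := by
    apply Finset.sum_congr rfl
    intro u hu
    exact dg_erase G U v u (Finset.ne_of_mem_erase hu)
  have h2 : ∑ u ∈ U.erase v, (if G.Adj u v ∧ v ∈ U then 1 else 0) = dg G U v := by
    have : ∀ u ∈ U.erase v, (if G.Adj u v ∧ v ∈ U then 1 else 0) = if G.Adj v u then 1 else 0 := by
      intro u hu
      simp only [hv, and_true]
      by_cases hadj : G.Adj u v
      · rw [if_pos hadj, if_pos (G.adj_comm u v |>.mp hadj)]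
      · rw [if_neg hadj, if_neg (fun h => hadj (G.adj_comm v u |>.mp h))]
    rw [Finset.sum_congr rfl this, ← Finset.sum_filter]
    unfold dg nb
    have : (U.erase v).filter (fun u => G.Adj v u) = U.filter (fun u => G.Adj v u) := by
      ext x
      simp only [Finset.mem_filter, Finset.mem_erase]
      constructor
      · rintro ⟨⟨_, h⟩, ha⟩; exact ⟨h, ha⟩
      · rintro ⟨h, ha⟩
        refine ⟨⟨?_, h⟩, ha⟩
        rintro rfl; exact G.irrefl ha
    rw [this]
    simp
  rw [h0, h1, Finset.sum_add_distrib, h2]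
  ring

lemma degen (D : ℝ) (U : Finset V) :
    2 * D * U.card < ∑ v ∈ U, (dg G U v : ℝ) →
    ∃ W : Finset V, W ⊆ U ∧ W.Nonempty ∧ ∀ v ∈ W, D < (dg G W v : ℝ) := by
  induction U using Finset.strongInduction with
  | _ U ih =>
    intro h
    by_cases hall : ∀ v ∈ U, D < (dg G U v : ℝ)
    · refine ⟨U, subset_rfl, ?_, hall⟩
      rcases U.eq_empty_or_nonempty with rfl | hne
      · simp at h
      · exact hne
    · push_neg at hall
      obtain ⟨v, hv, hdv⟩ := hall
      have hcard : (1:ℝ) ≤ U.card := by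
        have := Finset.card_pos.mpr ⟨v, hv⟩
        exact_mod_cast this
      have hkey : ∑ u ∈ U, (dg G U u : ℝ)
          = (∑ u ∈ U.erase v, (dg G (U.erase v) u : ℝ)) + 2 * dg G U v := by
        have := sum_dg_erase G U v hv
        exact_mod_cast congrArg (Nat.cast : ℕ → ℝ) this
      have hc : ((U.erase v).card : ℝ) = U.card - 1 := by
        rw [Finset.card_erase_of_mem hv]
        have : 1 ≤ U.card := Finset.card_pos.mpr ⟨v, hv⟩
        push_cast [Nat.cast_sub this]
        ring
      have h' : 2 * D * (U.erase v).card < ∑ u ∈ U.erase v, (dg G (U.erase v) u : ℝ) := by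
        rw [hc]
        nlinarith [hkey]
      obtain ⟨W, hW1, hW2, hW3⟩ := ih (U.erase v) (Finset.erase_ssubset hv) h'
      exact ⟨W, hW1.trans (Finset.erase_subset _ _), hW2, hW3⟩



lemma edgesBetween_coe (X Y : Finset V) :
    edgesBetween G (↑X) (↑Y) = eb G X Y := by
  unfold edgesBetween eb
  rw [← Set.ncard_coe_finset ((X ×ˢ Y).filter (fun p => G.Adj p.1 p.2))]
  congr 1
  ext p
  simp only [Set.mem_setOf_eq, Finset.coe_filter, Finset.mem_product, Finset.mem_coe,
    Set.mem_setOf_eq]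
  tauto

lemma card_powerset_mem_not_mem (S : Finset V) (a b : V) (ha : a ∈ S) (hb : b ∈ S)
    (hab : a ≠ b) :
    (S.powerset.filter (fun T => a ∈ T ∧ b ∉ T)).card = 2 ^ (S.card - 2) := by
  have hbe : b ∈ S.erase a := Finset.mem_erase.mpr ⟨hab.symm, hb⟩
  have hcard : ((S.erase a).erase b).card = S.card - 2 := by
    rw [Finset.card_erase_of_mem hbe, Finset.card_erase_of_mem ha]
    omega
  rw [← hcard, ← Finset.card_powerset]
  apply Finset.card_bij (fun T _ => T.erase a)
  · intro T hT
    simp only [Finset.mem_filter, Finset.mem_powerset] at hT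
    obtain ⟨hTS, haT, hbT⟩ := hT
    rw [Finset.mem_powerset]
    intro x hx
    rw [Finset.mem_erase] at hx
    exact Finset.mem_erase.mpr ⟨fun h => hbT (h ▸ hx.2), Finset.mem_erase.mpr ⟨hx.1, hTS hx.2⟩⟩
  · intro T1 hT1 T2 hT2 he
    simp only [Finset.mem_filter, Finset.mem_powerset] at hT1 hT2
    rw [← Finset.insert_erase hT1.2.1, ← Finset.insert_erase hT2.2.1, he]
  · intro T hT
    rw [Finset.mem_powerset] at hT
    refine ⟨insert a T, ?_, ?_⟩
    · simp only [Finset.mem_filter, Finset.mem_powerset]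
      have haT : a ∉ T := fun h => (Finset.mem_erase.mp (Finset.mem_erase.mp (hT h)).2).1 rfl
      refine ⟨?_, Finset.mem_insert_self _ _, ?_⟩
      · intro x hx
        rcases Finset.mem_insert.mp hx with rfl | hx
        · exact ha
        · exact (Finset.mem_erase.mp (Finset.mem_erase.mp (hT hx)).2).2
      · intro h
        rcases Finset.mem_insert.mp h with h | h
        · exact hab h.symm
        · exact (Finset.mem_erase.mp (hT h)).1 rfl
    · have haT : a ∉ T := fun h => (Finset.mem_erase.mp (Finset.mem_erase.mp (hT h)).2).1 rfl
      rw [Finset.erase_insert haT]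

lemma maxcut (S : Finset V) : ∃ T ⊆ S, eb G S S ≤ 4 * eb G T (S \ T) := by
  by_cases hE : eb G S S = 0
  · exact ⟨∅, Finset.empty_subset _, by simp [hE]⟩
  -- S has at least 2 elements
  have hS2 : 2 ≤ S.card := by
    have : ((S ×ˢ S).filter (fun p => G.Adj p.1 p.2)).Nonempty := by
      rw [← Finset.card_pos]
      exact Nat.pos_of_ne_zero hE
    obtain ⟨p, hp⟩ := this
    simp only [Finset.mem_filter, Finset.mem_product] at hp
    have hne : p.1 ≠ p.2 := G.ne_of_adj hp.2
    calc 2 = ({p.1, p.2} : Finset V).card := by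
              rw [Finset.card_insert_of_notMem (by simp [hne]), Finset.card_singleton]
      _ ≤ S.card := Finset.card_le_card (by
              intro x hx
              rcases Finset.mem_insert.mp hx with rfl | hx
              · exact hp.1.1
              · rw [Finset.mem_singleton] at hx; exact hx ▸ hp.1.2)
  -- the key average count
  have hsum : ∑ T ∈ S.powerset, eb G T (S \ T) = eb G S S * 2 ^ (S.card - 2) := by
    have hterm : ∀ T ∈ S.powerset, eb G T (S \ T)
        = ∑ p ∈ (S ×ˢ S).filter (fun p => G.Adj p.1 p.2),
            (if p.1 ∈ T ∧ p.2 ∉ T then 1 else 0) := by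
      intro T hT
      rw [Finset.mem_powerset] at hT
      rw [← Finset.sum_filter, Finset.sum_const, smul_eq_mul, mul_one]
      unfold eb
      congr 1
      ext p
      simp only [Finset.mem_filter, Finset.mem_product, Finset.mem_sdiff]
      constructor
      · rintro ⟨⟨h1, h2⟩, h3⟩
        exact ⟨⟨⟨hT h1, h2.1⟩, h3⟩, h1, h2.2⟩
      · rintro ⟨⟨⟨_, h2⟩, h3⟩, h4, h5⟩
        exact ⟨⟨h4, h2, h5⟩, h3⟩
    rw [Finset.sum_congr rfl hterm, Finset.sum_comm]
    have hpt : ∀ p ∈ (S ×ˢ S).filter (fun p => G.Adj p.1 p.2),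
        ∑ T ∈ S.powerset, (if p.1 ∈ T ∧ p.2 ∉ T then 1 else 0) = 2 ^ (S.card - 2) := by
      intro p hp
      simp only [Finset.mem_filter, Finset.mem_product] at hp
      rw [← Finset.sum_filter, Finset.sum_const, smul_eq_mul, mul_one]
      exact card_powerset_mem_not_mem S p.1 p.2 hp.1.1 hp.1.2 (G.ne_of_adj hp.2)
    rw [Finset.sum_congr rfl hpt, Finset.sum_const, smul_eq_mul]
    rfl
  -- conclude by contradiction
  by_contra hcon
  push_neg at hcon
  have hlt : ∀ T ∈ S.powerset, 4 * eb G T (S \ T) < eb G S S := by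
    intro T hT
    have := hcon T (Finset.mem_powerset.mp hT)
    omega
  have h1 : ∑ T ∈ S.powerset, 4 * eb G T (S \ T) < ∑ T ∈ S.powerset, eb G S S :=
    Finset.sum_lt_sum_of_nonempty ⟨∅, by simp⟩ hlt
  rw [← Finset.mul_sum, hsum, Finset.sum_const, smul_eq_mul, Finset.card_powerset] at h1
  have h2 : 4 * 2 ^ (S.card - 2) = 2 ^ S.card := by
    have h3 : S.card - 2 + 2 = S.card := by omega
    calc 4 * 2 ^ (S.card - 2) = 2 ^ (S.card - 2) * 2 ^ 2 := by ring
      _ = 2 ^ (S.card - 2 + 2) := (pow_add 2 _ 2).symm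
      _ = 2 ^ S.card := by rw [h3]
  rw [← mul_assoc, mul_comm 4 (eb G S S), mul_assoc, h2, mul_comm] at h1
  exact lt_irrefl _ h1



def Hyp (G : SimpleGraph V) (α C : ℝ) : Prop :=
  ∀ u v : V, u ≠ v → ∀ U W : Set V,
    U ⊆ G.neighborSet u \ {v} → W ⊆ G.neighborSet v \ {u} → Disjoint U W →
    (edgesBetween G U W : ℝ) ≤ C * ((U.ncard + W.ncard : ℕ) : ℝ) ^ (2 - α)

lemma hyp_bound (h : Hyp G α C) {u v : V} (huv : u ≠ v) {X Y : Finset V}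
    (hX : ∀ x ∈ X, G.Adj u x ∧ x ≠ v) (hY : ∀ y ∈ Y, G.Adj v y ∧ y ≠ u)
    (hdisj : Disjoint X Y) :
    (eb G X Y : ℝ) ≤ C * ((X.card + Y.card : ℕ) : ℝ) ^ (2 - α) := by
  have := h u v huv (↑X) (↑Y)
    (by intro x hx
        simp only [Finset.mem_coe] at hx
        obtain ⟨h1, h2⟩ := hX x hx
        simp only [Set.mem_diff, SimpleGraph.mem_neighborSet, Set.mem_singleton_iff]
        exact ⟨h1, h2⟩)
    (by intro y hy
        simp only [Finset.mem_coe] at hy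
        obtain ⟨h1, h2⟩ := hY y hy
        simp only [Set.mem_diff, SimpleGraph.mem_neighborSet, Set.mem_singleton_iff]
        exact ⟨h1, h2⟩)
    (Finset.disjoint_coe.mpr hdisj)
  rwa [edgesBetween_coe, Set.ncard_coe_finset, Set.ncard_coe_finset] at this

lemma rpow_cast_mono {a b : ℕ} (hab : a ≤ b) (hp : 0 ≤ (2 - α)) :
    ((a : ℝ)) ^ (2 - α) ≤ ((b : ℝ)) ^ (2 - α) :=
  Real.rpow_le_rpow (by positivity) (by exact_mod_cast hab) hp

/-- main local application: the ordered pairs between punctured neighbourhoods -/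
lemma Nstar_bound (h : Hyp G α C) (hα2 : α < 2) (hC : 0 < C) (U : Finset V) {u v : V}
    (huv : u ≠ v) :
    (eb G ((nb G U u).erase v) ((nb G U v).erase u) : ℝ)
      ≤ 6 * C * ((dg G U u + dg G U v : ℕ) : ℝ) ^ (2 - α) := by
  set A := (nb G U u).erase v with hA
  set B := (nb G U v).erase u with hB
  have hAmem : ∀ x ∈ A, G.Adj u x ∧ x ≠ v := by
    intro x hx
    rw [hA, Finset.mem_erase, mem_nb] at hx
    exact ⟨hx.2.2, hx.1⟩
  have hBmem : ∀ y ∈ B, G.Adj v y ∧ y ≠ u := by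
    intro y hy
    rw [hB, Finset.mem_erase, mem_nb] at hy
    exact ⟨hy.2.2, hy.1⟩
  have hcardA : A.card ≤ dg G U u := by
    apply Finset.card_le_card
    rw [hA]; exact Finset.erase_subset _ _
  have hcardB : B.card ≤ dg G U v := by
    apply Finset.card_le_card
    rw [hB]; exact Finset.erase_subset _ _
  have hp : (0:ℝ) ≤ 2 - α := by linarith
  -- split the product into three pieces
  have hsplit : eb G A B ≤ eb G (A \ B) B + eb G (A ∩ B) (B \ A) + eb G (A ∩ B) (A ∩ B) := by
    unfold eb
    have hsub : (A ×ˢ B).filter (fun p => G.Adj p.1 p.2) ⊆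
        (((A \ B) ×ˢ B).filter (fun p => G.Adj p.1 p.2)) ∪
        (((A ∩ B) ×ˢ (B \ A)).filter (fun p => G.Adj p.1 p.2)) ∪
        (((A ∩ B) ×ˢ (A ∩ B)).filter (fun p => G.Adj p.1 p.2)) := by
      intro p hp'
      simp only [Finset.mem_filter, Finset.mem_product] at hp'
      obtain ⟨⟨h1, h2⟩, h3⟩ := hp'
      simp only [Finset.mem_union, Finset.mem_filter, Finset.mem_product, Finset.mem_sdiff,
        Finset.mem_inter]
      by_cases hb : p.1 ∈ B
      · by_cases ha : p.2 ∈ A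
        · exact Or.inr ⟨⟨⟨h1, hb⟩, ⟨ha, h2⟩⟩, h3⟩
        · exact Or.inl (Or.inr ⟨⟨⟨h1, hb⟩, ⟨h2, ha⟩⟩, h3⟩)
      · exact Or.inl (Or.inl ⟨⟨⟨h1, hb⟩, h2⟩, h3⟩)
    calc ((A ×ˢ B).filter (fun p => G.Adj p.1 p.2)).card ≤ _ := Finset.card_le_card hsub
      _ ≤ _ := (Finset.card_union_le _ _).trans
          (by gcongr <;> exact Finset.card_union_le _ _)
  -- bound the three pieces
  set z : ℝ := ((dg G U u + dg G U v : ℕ) : ℝ) ^ (2 - α) with hz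
  have hz0 : 0 ≤ z := Real.rpow_nonneg (by positivity) _
  have piece1 : (eb G (A \ B) B : ℝ) ≤ C * z := by
    refine (hyp_bound G h huv (fun x hx => hAmem x (Finset.mem_sdiff.mp hx).1) hBmem
      Finset.sdiff_disjoint).trans ?_
    have : (A \ B).card + B.card ≤ dg G U u + dg G U v := by
      have := Finset.card_le_card (Finset.sdiff_subset (s := A) (t := B))
      omega
    exact mul_le_mul_of_nonneg_left (rpow_cast_mono this hp) hC.le
  have piece2 : (eb G (A ∩ B) (B \ A) : ℝ) ≤ C * z := by
    refine (hyp_bound G h huv (fun x hx => hAmem x (Finset.mem_inter.mp hx).1)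
      (fun y hy => hBmem y (Finset.mem_sdiff.mp hy).1) ?_).trans ?_
    · rw [Finset.disjoint_left]
      intro x hx hx'
      exact (Finset.mem_sdiff.mp hx').2 (Finset.mem_inter.mp hx).1
    · have : (A ∩ B).card + (B \ A).card ≤ dg G U u + dg G U v := by
        have h1 := Finset.card_le_card (Finset.inter_subset_left (s₁ := A) (s₂ := B))
        have h2 := Finset.card_le_card (Finset.sdiff_subset (s := B) (t := A))
        omega
      exact mul_le_mul_of_nonneg_left (rpow_cast_mono this hp) hC.le
  have piece3 : (eb G (A ∩ B) (A ∩ B) : ℝ) ≤ 4 * C * z := by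
    obtain ⟨T, hT, hcut⟩ := maxcut G (A ∩ B)
    have hbd : (eb G T ((A ∩ B) \ T) : ℝ) ≤ C * z := by
      refine (hyp_bound G h huv (fun x hx => hAmem x (Finset.mem_inter.mp (hT hx)).1)
        (fun y hy => hBmem y (Finset.mem_inter.mp (Finset.mem_sdiff.mp hy).1).2)
        Finset.disjoint_sdiff).trans ?_
      have : T.card + ((A ∩ B) \ T).card ≤ dg G U u + dg G U v := by
        have h1 : ((A ∩ B) \ T).card + T.card = (A ∩ B).card :=
          Finset.card_sdiff_add_card_eq_card hT
        have h2 := Finset.card_le_card (Finset.inter_subset_left (s₁ := A) (s₂ := B))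
        omega
      exact mul_le_mul_of_nonneg_left (rpow_cast_mono this hp) hC.le
    calc (eb G (A ∩ B) (A ∩ B) : ℝ) ≤ 4 * (eb G T ((A ∩ B) \ T) : ℝ) := by exact_mod_cast hcut
      _ ≤ 4 * (C * z) := by linarith
      _ = 4 * C * z := by ring
  calc (eb G A B : ℝ)
      ≤ (eb G (A \ B) B : ℝ) + (eb G (A ∩ B) (B \ A) : ℝ) + (eb G (A ∩ B) (A ∩ B) : ℝ) := by
        exact_mod_cast hsplit
    _ ≤ C * z + C * z + 4 * C * z := by linarith
    _ = 6 * C * z := by ring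

/-- decomposition of the full pair count between two neighbourhoods -/
lemma W_decomp (U : Finset V) {u v : V} (huv : u ≠ v) :
    eb G (nb G U u) (nb G U v)
      ≤ (if v ∈ nb G U u then dg G U v else 0) + (if u ∈ nb G U v then dg G U u else 0)
        + eb G ((nb G U u).erase v) ((nb G U v).erase u) := by
  classical
  set P := (nb G U u ×ˢ nb G U v).filter (fun p => G.Adj p.1 p.2) with hP
  have hsplit1 := Finset.card_filter_add_card_filter_not
    (s := P) (p := fun p => p.1 = v)
  have hsplit2 := Finset.card_filter_add_card_filter_not
    (s := P.filter (fun p => ¬ p.1 = v)) (p := fun p => p.2 = u)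
  have hbd1 : (P.filter (fun p => p.1 = v)).card ≤ if v ∈ nb G U u then dg G U v else 0 := by
    by_cases hv : v ∈ nb G U u
    · rw [if_pos hv]
      have : P.filter (fun p => p.1 = v) ⊆ {v} ×ˢ nb G U v := by
        intro p hp'
        simp only [hP, Finset.mem_filter, Finset.mem_product] at hp'
        simp only [Finset.mem_product, Finset.mem_singleton]
        exact ⟨hp'.2, hp'.1.1.2⟩
      calc (P.filter (fun p => p.1 = v)).card ≤ ({v} ×ˢ nb G U v).card :=
            Finset.card_le_card this
        _ = dg G U v := by rw [Finset.card_product, Finset.card_singleton, one_mul]; rfl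
    · rw [if_neg hv]
      rw [Nat.le_zero, Finset.card_eq_zero, Finset.filter_eq_empty_iff]
      intro p hp'
      simp only [hP, Finset.mem_filter, Finset.mem_product] at hp'
      intro hpv
      exact hv (hpv ▸ hp'.1.1)
  have hbd2 : ((P.filter (fun p => ¬ p.1 = v)).filter (fun p => p.2 = u)).card
      ≤ if u ∈ nb G U v then dg G U u else 0 := by
    by_cases hu : u ∈ nb G U v
    · rw [if_pos hu]
      have : (P.filter (fun p => ¬ p.1 = v)).filter (fun p => p.2 = u) ⊆ nb G U u ×ˢ {u} := by
        intro p hp'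
        simp only [hP, Finset.mem_filter, Finset.mem_product] at hp'
        simp only [Finset.mem_product, Finset.mem_singleton]
        exact ⟨hp'.1.1.1.1, hp'.2⟩
      calc _ ≤ (nb G U u ×ˢ ({u} : Finset V)).card := Finset.card_le_card this
        _ = dg G U u := by rw [Finset.card_product, Finset.card_singleton, mul_one]; rfl
    · rw [if_neg hu]
      rw [Nat.le_zero, Finset.card_eq_zero, Finset.filter_eq_empty_iff]
      intro p hp'
      simp only [hP, Finset.mem_filter, Finset.mem_product] at hp'
      intro hpu
      exact hu (hpu ▸ hp'.1.1.2)
  have hbd3 : ((P.filter (fun p => ¬ p.1 = v)).filter (fun p => ¬ p.2 = u)).card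
      ≤ eb G ((nb G U u).erase v) ((nb G U v).erase u) := by
    apply Finset.card_le_card
    intro p hp'
    simp only [hP, Finset.mem_filter, Finset.mem_product] at hp'
    obtain ⟨⟨⟨⟨hp1, hp2⟩, hadj⟩, hne1⟩, hne2⟩ := hp'
    simp only [eb, Finset.mem_filter, Finset.mem_product, Finset.mem_erase]
    exact ⟨⟨⟨hne1, hp1⟩, ⟨hne2, hp2⟩⟩, hadj⟩
  calc eb G (nb G U u) (nb G U v) = P.card := rfl
    _ = (P.filter (fun p => p.1 = v)).card + (P.filter (fun p => ¬ p.1 = v)).card :=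
        hsplit1.symm
    _ = (P.filter (fun p => p.1 = v)).card
        + (((P.filter (fun p => ¬ p.1 = v)).filter (fun p => p.2 = u)).card
          + ((P.filter (fun p => ¬ p.1 = v)).filter (fun p => ¬ p.2 = u)).card) := by
        rw [hsplit2]
    _ ≤ _ := by omega



def ind (c : Prop) [Decidable c] : ℝ := if c then 1 else 0

lemma ind_pos {c : Prop} [Decidable c] (h : c) : ind c = 1 := if_pos h
lemma ind_neg {c : Prop} [Decidable c] (h : ¬ c) : ind c = 0 := if_neg h

lemma ind_congr {c d : Prop} [Decidable c] [Decidable d] (h : c ↔ d) : ind c = ind d := by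
  by_cases hc : c
  · rw [ind_pos hc, ind_pos (h.mp hc)]
  · rw [ind_neg hc, ind_neg (fun hd => hc (h.mpr hd))]

lemma sum_nb_eq (U : Finset V) (a : V) (f : V → ℝ) :
    ∑ x ∈ nb G U a, f x = ∑ x ∈ U, if G.Adj a x then f x else 0 := by
  rw [nb]; exact Finset.sum_filter _ _

lemma sum4_swap (s : Finset V) (f : V → V → V → V → ℝ) :
    ∑ x ∈ s, ∑ y ∈ s, ∑ a ∈ s, ∑ b ∈ s, f x y a b
      = ∑ a ∈ s, ∑ b ∈ s, ∑ x ∈ s, ∑ y ∈ s, f x y a b := by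
  calc ∑ x ∈ s, ∑ y ∈ s, ∑ a ∈ s, ∑ b ∈ s, f x y a b
      = ∑ x ∈ s, ∑ a ∈ s, ∑ y ∈ s, ∑ b ∈ s, f x y a b :=
        Finset.sum_congr rfl (fun x _ => Finset.sum_comm)
    _ = ∑ a ∈ s, ∑ x ∈ s, ∑ y ∈ s, ∑ b ∈ s, f x y a b := Finset.sum_comm
    _ = ∑ a ∈ s, ∑ x ∈ s, ∑ b ∈ s, ∑ y ∈ s, f x y a b :=
        Finset.sum_congr rfl (fun a _ => Finset.sum_congr rfl (fun x _ => Finset.sum_comm))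
    _ = ∑ a ∈ s, ∑ b ∈ s, ∑ x ∈ s, ∑ y ∈ s, f x y a b :=
        Finset.sum_congr rfl (fun a _ => Finset.sum_comm)

lemma eb_expand (U : Finset V) (u v : V) :
    (eb G (nb G U u) (nb G U v) : ℝ)
      = ∑ a ∈ U, ∑ b ∈ U, ind (G.Adj u a) * ind (G.Adj v b) * ind (G.Adj a b) := by
  have h0 : eb G (nb G U u) (nb G U v)
      = ∑ p ∈ nb G U u ×ˢ nb G U v, if G.Adj p.1 p.2 then 1 else 0 :=
    Finset.card_filter _ _
  have h1 : (eb G (nb G U u) (nb G U v) : ℝ)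
      = ∑ a ∈ nb G U u, ∑ b ∈ nb G U v, ind (G.Adj a b) := by
    rw [h0]
    push_cast
    rw [Finset.sum_product]
    apply Finset.sum_congr rfl; intro a _
    apply Finset.sum_congr rfl; intro b _
    simp [ind]
  rw [h1]
  rw [sum_nb_eq G U u]
  apply Finset.sum_congr rfl; intro a _
  by_cases hua : G.Adj u a
  · rw [if_pos hua, sum_nb_eq G U v]
    apply Finset.sum_congr rfl; intro b _
    by_cases hvb : G.Adj v b
    · rw [if_pos hvb, ind_pos hua, ind_pos hvb]; ring
    · rw [if_neg hvb, ind_neg hvb]; ring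
  · rw [if_neg hua, eq_comm]
    apply Finset.sum_eq_zero
    intro b _
    rw [ind_neg hua]; ring

lemma reindex (U : Finset V) (w : V → ℝ) :
    ∑ a ∈ U, ∑ b ∈ nb G U a, (∑ x ∈ nb G U a, w x) * (∑ y ∈ nb G U b, w y)
      = ∑ x ∈ U, ∑ y ∈ U, (w x * w y) * (eb G (nb G U x) (nb G U y) : ℝ) := by
  have hRHS : ∑ x ∈ U, ∑ y ∈ U, (w x * w y) * (eb G (nb G U x) (nb G U y) : ℝ)
      = ∑ x ∈ U, ∑ y ∈ U, ∑ a ∈ U, ∑ b ∈ U,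
          (w x * w y) * (ind (G.Adj x a) * ind (G.Adj y b) * ind (G.Adj a b)) := by
    apply Finset.sum_congr rfl; intro x _
    apply Finset.sum_congr rfl; intro y _
    rw [eb_expand, Finset.mul_sum]
    apply Finset.sum_congr rfl; intro a _
    rw [Finset.mul_sum]
  have hLHS : ∑ a ∈ U, ∑ b ∈ nb G U a, (∑ x ∈ nb G U a, w x) * (∑ y ∈ nb G U b, w y)
      = ∑ a ∈ U, ∑ b ∈ U, ∑ x ∈ U, ∑ y ∈ U,
          (w x * w y) * (ind (G.Adj a x) * ind (G.Adj b y) * ind (G.Adj a b)) := by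
    apply Finset.sum_congr rfl; intro a _
    rw [sum_nb_eq G U a (fun b => (∑ x ∈ nb G U a, w x) * (∑ y ∈ nb G U b, w y))]
    apply Finset.sum_congr rfl; intro b _
    by_cases hab : G.Adj a b
    · rw [if_pos hab]
      have hx : ∑ x ∈ nb G U a, w x = ∑ x ∈ U, ind (G.Adj a x) * w x := by
        rw [sum_nb_eq G U a w]
        apply Finset.sum_congr rfl; intro x _
        by_cases h : G.Adj a x
        · rw [if_pos h, ind_pos h, one_mul]
        · rw [if_neg h, ind_neg h, zero_mul]
      have hy : ∑ y ∈ nb G U b, w y = ∑ y ∈ U, ind (G.Adj b y) * w y := by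
        rw [sum_nb_eq G U b w]
        apply Finset.sum_congr rfl; intro y _
        by_cases h : G.Adj b y
        · rw [if_pos h, ind_pos h, one_mul]
        · rw [if_neg h, ind_neg h, zero_mul]
      rw [hx, hy, Finset.sum_mul_sum]
      apply Finset.sum_congr rfl; intro x _
      apply Finset.sum_congr rfl; intro y _
      rw [ind_pos hab]
      ring
    · rw [if_neg hab, eq_comm]
      apply Finset.sum_eq_zero; intro x _
      apply Finset.sum_eq_zero; intro y _
      rw [ind_neg hab]
      ring
  rw [hLHS, hRHS, sum4_swap]
  apply Finset.sum_congr rfl; intro a _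
  apply Finset.sum_congr rfl; intro b _
  apply Finset.sum_congr rfl; intro x _
  apply Finset.sum_congr rfl; intro y _
  rw [ind_congr (G.adj_comm x a), ind_congr (G.adj_comm y b)]


noncomputable def sw (U : Finset V) (a : V) : ℝ := ∑ u ∈ nb G U a, ((dg G U u : ℝ))⁻¹

lemma sw_pos {U : Finset V} {a : V} (hmin : ∀ v ∈ U, 1 ≤ dg G U v) (ha : a ∈ U)
    : 0 < sw G U a := by
  unfold sw
  apply Finset.sum_pos
  · intro u hu
    have hu' : u ∈ U := (mem_nb G).mp hu |>.1
    have : (1:ℝ) ≤ (dg G U u : ℝ) := by exact_mod_cast hmin u hu'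
    positivity
  · rw [← Finset.card_pos]
    exact lt_of_lt_of_le Nat.one_pos (hmin a ha)

lemma log_sw_bound {U : Finset V} {a : V} (hmin : ∀ v ∈ U, 1 ≤ dg G U v) (ha : a ∈ U) :
    (dg G U a : ℝ) * Real.log (dg G U a) - (∑ u ∈ nb G U a, Real.log (dg G U u))
      ≤ (dg G U a : ℝ) * Real.log (sw G U a) := by
  have hd : (0:ℝ) < (dg G U a : ℝ) := by
    have := hmin a ha
    exact_mod_cast lt_of_lt_of_le Nat.one_pos this
  set t : ℝ := (∑ u ∈ nb G U a, Real.log (dg G U u)) / (dg G U a : ℝ) with ht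
  have hdt : (dg G U a : ℝ) * t = ∑ u ∈ nb G U a, Real.log (dg G U u) := by
    rw [ht]; field_simp
  have claim1 : (dg G U a : ℝ) * Real.exp (-t) ≤ sw G U a := by
    have hpt : ∀ u ∈ nb G U a, Real.exp (-t) * (1 + (t - Real.log (dg G U u)))
        ≤ ((dg G U u : ℝ))⁻¹ := by
      intro u hu
      have hu' : u ∈ U := (mem_nb G).mp hu |>.1
      have hdu : (0:ℝ) < (dg G U u : ℝ) := by
        exact_mod_cast lt_of_lt_of_le Nat.one_pos (hmin u hu')
      have h1 : ((dg G U u : ℝ))⁻¹ = Real.exp (-t) * Real.exp (t - Real.log (dg G U u)) := by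
        rw [← Real.exp_add]
        have : -t + (t - Real.log (dg G U u)) = - Real.log (dg G U u) := by ring
        rw [this, Real.exp_neg, Real.exp_log hdu]
      rw [h1]
      have h2 : 1 + (t - Real.log (dg G U u)) ≤ Real.exp (t - Real.log (dg G U u)) := by
        have := Real.add_one_le_exp (t - Real.log (dg G U u))
        linarith
      have h3 : (0:ℝ) < Real.exp (-t) := Real.exp_pos _
      nlinarith
    have hsum := Finset.sum_le_sum hpt
    have hswdef : sw G U a = ∑ u ∈ nb G U a, ((dg G U u : ℝ))⁻¹ := rfl
    rw [hswdef]
    refine le_trans (le_of_eq ?_) hsum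
    rw [← Finset.mul_sum]
    have hcount : ∑ u ∈ nb G U a, (1 + (t - Real.log (dg G U u)))
        = (dg G U a : ℝ) + (dg G U a : ℝ) * t - ∑ u ∈ nb G U a, Real.log (dg G U u) := by
      rw [Finset.sum_add_distrib, Finset.sum_sub_distrib, Finset.sum_const, Finset.sum_const]
      simp only [nsmul_eq_mul, mul_one]
      unfold dg
      ring
    rw [hcount, hdt]
    ring
  have claim2 : Real.log (dg G U a) - t ≤ Real.log (sw G U a) := by
    have h0 : (0:ℝ) < (dg G U a : ℝ) * Real.exp (-t) := by positivity
    have := Real.log_le_log h0 claim1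
    rw [Real.log_mul (ne_of_gt hd) (ne_of_gt (Real.exp_pos _)), Real.log_exp] at this
    linarith
  have := mul_le_mul_of_nonneg_left claim2 hd.le
  rw [mul_sub, hdt] at this
  linarith

lemma lower_bound (U : Finset V) (hmin : ∀ v ∈ U, 1 ≤ dg G U v) :
    ∑ v ∈ U, (dg G U v : ℝ) ≤ ∑ a ∈ U, ∑ b ∈ nb G U a, sw G U a * sw G U b := by
  have key : ∀ a ∈ U, ∀ b ∈ nb G U a,
      1 + Real.log (sw G U a) + Real.log (sw G U b) ≤ sw G U a * sw G U b := by
    intro a ha b hb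
    have hb' : b ∈ U := (mem_nb G).mp hb |>.1
    have hsa := sw_pos G hmin ha
    have hsb := sw_pos G hmin hb'
    have h1 : sw G U a * sw G U b = Real.exp (Real.log (sw G U a) + Real.log (sw G U b)) := by
      rw [Real.exp_add, Real.exp_log hsa, Real.exp_log hsb]
    rw [h1]
    have := Real.add_one_le_exp (Real.log (sw G U a) + Real.log (sw G U b))
    linarith
  have step1 : ∑ a ∈ U, ∑ b ∈ nb G U a, (1 + Real.log (sw G U a) + Real.log (sw G U b))
      ≤ ∑ a ∈ U, ∑ b ∈ nb G U a, sw G U a * sw G U b := by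
    apply Finset.sum_le_sum
    intro a ha
    apply Finset.sum_le_sum
    intro b hb
    exact key a ha b hb
  have step2 : ∑ a ∈ U, ∑ b ∈ nb G U a, (1 + Real.log (sw G U a) + Real.log (sw G U b))
      = (∑ v ∈ U, (dg G U v : ℝ))
        + (∑ a ∈ U, (dg G U a : ℝ) * Real.log (sw G U a))
        + (∑ b ∈ U, (dg G U b : ℝ) * Real.log (sw G U b)) := by
    have expand : ∀ a ∈ U, ∑ b ∈ nb G U a, (1 + Real.log (sw G U a) + Real.log (sw G U b))
        = (dg G U a : ℝ) + (dg G U a : ℝ) * Real.log (sw G U a)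
          + ∑ b ∈ nb G U a, Real.log (sw G U b) := by
      intro a _
      rw [Finset.sum_add_distrib, Finset.sum_add_distrib, Finset.sum_const, Finset.sum_const]
      simp only [nsmul_eq_mul, mul_one]
      unfold dg
      ring
    rw [Finset.sum_congr rfl expand, Finset.sum_add_distrib,
      Finset.sum_add_distrib, sum_nb G U (fun b => Real.log (sw G U b))]
  have step3 : 0 ≤ ∑ a ∈ U, (dg G U a : ℝ) * Real.log (sw G U a) := by
    have h1 : ∑ a ∈ U, ((dg G U a : ℝ) * Real.log (dg G U a)
        - ∑ u ∈ nb G U a, Real.log (dg G U u))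
        ≤ ∑ a ∈ U, (dg G U a : ℝ) * Real.log (sw G U a) := by
      apply Finset.sum_le_sum
      intro a ha
      exact log_sw_bound G hmin ha
    have h2 : ∑ a ∈ U, ((dg G U a : ℝ) * Real.log (dg G U a)
        - ∑ u ∈ nb G U a, Real.log (dg G U u)) = 0 := by
      rw [Finset.sum_sub_distrib, sum_nb G U (fun u => Real.log (dg G U u))]
      ring
    linarith
  calc ∑ v ∈ U, (dg G U v : ℝ)
      ≤ ∑ a ∈ U, ∑ b ∈ nb G U a, (1 + Real.log (sw G U a) + Real.log (sw G U b)) := by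
        rw [step2]
        nlinarith [step3]
    _ ≤ _ := step1



lemma rpow_add_le (x y p : ℝ) (hx : 0 ≤ x) (hy : 0 ≤ y) (hp0 : 0 ≤ p) (hp2 : p ≤ 2) :
    (x + y) ^ p ≤ 4 * (x ^ p + y ^ p) := by
  rcases le_total x y with hxy | hxy
  · have h1 : (x + y) ^ p ≤ (2 * y) ^ p :=
      Real.rpow_le_rpow (by linarith) (by linarith) hp0
    have h2 : (2 * y) ^ p = 2 ^ p * y ^ p := Real.mul_rpow (by norm_num) hy
    have h3 : (2:ℝ) ^ p ≤ 2 ^ (2:ℝ) := Real.rpow_le_rpow_of_exponent_le (by norm_num) hp2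
    have h4 : (2:ℝ) ^ (2:ℝ) = 4 := by
      rw [show (2:ℝ) = ((2:ℕ):ℝ) by norm_num, Real.rpow_natCast]
      norm_num
    have hyp : 0 ≤ y ^ p := Real.rpow_nonneg hy p
    have hxp : 0 ≤ x ^ p := Real.rpow_nonneg hx p
    nlinarith
  · have h1 : (x + y) ^ p ≤ (2 * x) ^ p :=
      Real.rpow_le_rpow (by linarith) (by linarith) hp0
    have h2 : (2 * x) ^ p = 2 ^ p * x ^ p := Real.mul_rpow (by norm_num) hx
    have h3 : (2:ℝ) ^ p ≤ 2 ^ (2:ℝ) := Real.rpow_le_rpow_of_exponent_le (by norm_num) hp2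
    have h4 : (2:ℝ) ^ (2:ℝ) = 4 := by
      rw [show (2:ℝ) = ((2:ℕ):ℝ) by norm_num, Real.rpow_natCast]
      norm_num
    have hyp : 0 ≤ y ^ p := Real.rpow_nonneg hy p
    have hxp : 0 ≤ x ^ p := Real.rpow_nonneg hx p
    nlinarith

lemma aux_weight (d D : ℝ) (hD : 0 < D) (hd : D ≤ d) (hα0 : 0 ≤ α) :
    d⁻¹ * d ^ (2 - α) ≤ d * D ^ (-α) := by
  have hd0 : 0 < d := lt_of_lt_of_le hD hd
  have h1 : d⁻¹ * d ^ (2 - α) = d ^ (1 - α) := by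
    rw [← Real.rpow_neg_one d, ← Real.rpow_add hd0, show (-1:ℝ) + (2 - α) = 1 - α by ring]
  have h2 : d ^ (1 - α) = d * d ^ (-α) := by
    rw [show (1 - α) = 1 + (-α) by ring, Real.rpow_add hd0, Real.rpow_one]
  have h3 : d ^ (-α) ≤ D ^ (-α) :=
    Real.rpow_le_rpow_of_nonpos hD hd (by linarith)
  rw [h1, h2]
  exact mul_le_mul_of_nonneg_left h3 hd0.le

lemma sum_expand (s : Finset V) (f g f' g' : V → ℝ) (c : ℝ) :
    ∑ x ∈ s, ∑ y ∈ s, c * (f x * g y + g' x * f' y)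
      = c * ((∑ x ∈ s, f x) * (∑ y ∈ s, g y) + (∑ x ∈ s, g' x) * (∑ y ∈ s, f' y)) := by
  rw [Finset.sum_mul_sum, Finset.sum_mul_sum, ← Finset.sum_add_distrib, Finset.mul_sum]
  refine Finset.sum_congr rfl ?_
  intro x _
  rw [← Finset.sum_add_distrib, Finset.mul_sum]

lemma nb_subset_erase (U : Finset V) (x : V) : nb G U x ⊆ U.erase x := by
  intro y hy
  rw [mem_nb] at hy
  exact Finset.mem_erase.mpr ⟨(G.ne_of_adj hy.2).symm, hy.1⟩

/-- The global upper bound on the weighted walk count. -/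
lemma upper_bound (hα0 : 0 ≤ α) (hα2 : α < 2) (hC : 0 < C)
    (U : Finset V) (D : ℝ) (hD0 : 0 < D)
    (hyp6C : ∀ u v : V, u ≠ v →
      (eb G ((nb G U u).erase v) ((nb G U v).erase u) : ℝ)
        ≤ 6 * C * ((dg G U u + dg G U v : ℕ) : ℝ) ^ (2 - α))
    (hminD : ∀ v ∈ U, D ≤ (dg G U v : ℝ)) :
    ∑ x ∈ U, ∑ y ∈ U, (((dg G U x : ℝ))⁻¹ * ((dg G U y : ℝ))⁻¹) * (eb G (nb G U x) (nb G U y) : ℝ)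
      ≤ 3 * U.card + (48 * C * (D ^ (-α) * ∑ v ∈ U, (dg G U v : ℝ)) * (U.card * D⁻¹)) := by
  set w : V → ℝ := fun v => ((dg G U v : ℝ))⁻¹ with hw
  have hdpos : ∀ v ∈ U, (0:ℝ) < (dg G U v : ℝ) := fun v hv => lt_of_lt_of_le hD0 (hminD v hv)
  have hwpos : ∀ v ∈ U, 0 < w v := fun v hv => inv_pos.mpr (hdpos v hv)
  have hwd : ∀ v ∈ U, w v * (dg G U v : ℝ) = 1 := fun v hv =>
    inv_mul_cancel₀ (ne_of_gt (hdpos v hv))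
  -- diagonal term
  have hdiag : ∀ x ∈ U, (w x * w x) * (eb G (nb G U x) (nb G U x) : ℝ) ≤ 1 := by
    intro x hx
    have h1 : (eb G (nb G U x) (nb G U x) : ℝ) ≤ (dg G U x : ℝ) * (dg G U x : ℝ) := by
      have : eb G (nb G U x) (nb G U x) ≤ dg G U x * dg G U x := by
        unfold eb dg
        calc _ ≤ (nb G U x ×ˢ nb G U x).card := Finset.card_filter_le _ _
          _ = _ := Finset.card_product _ _
      exact_mod_cast this
    have hwx := hwpos x hx
    calc (w x * w x) * (eb G (nb G U x) (nb G U x) : ℝ)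
        ≤ (w x * w x) * ((dg G U x : ℝ) * (dg G U x : ℝ)) := by nlinarith
      _ = (w x * (dg G U x:ℝ)) * (w x * (dg G U x:ℝ)) := by ring
      _ = 1 := by rw [hwd x hx]; norm_num
  -- off-diagonal decomposition, pointwise
  have hoff : ∀ x ∈ U, ∀ y ∈ U.erase x,
      (w x * w y) * (eb G (nb G U x) (nb G U y) : ℝ)
        ≤ (if y ∈ nb G U x then w x else 0)
          + (if x ∈ nb G U y then w y else 0)
          + (w x * w y) * (6 * C * ((dg G U x + dg G U y : ℕ) : ℝ) ^ (2 - α)) := by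
    intro x hx y hy
    have hyU : y ∈ U := Finset.mem_of_mem_erase hy
    have hxy : x ≠ y := fun h => (Finset.mem_erase.mp hy).1 h.symm
    have hwx := hwpos x hx
    have hwy := hwpos y hyU
    have hwxy : 0 ≤ w x * w y := le_of_lt (mul_pos hwx hwy)
    have hdec := W_decomp G U hxy
    have hdecR : (eb G (nb G U x) (nb G U y) : ℝ)
        ≤ (if y ∈ nb G U x then (dg G U y : ℝ) else 0)
          + (if x ∈ nb G U y then (dg G U x : ℝ) else 0)
          + (eb G ((nb G U x).erase y) ((nb G U y).erase x) : ℝ) := by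
      by_cases c1 : y ∈ nb G U x <;> by_cases c2 : x ∈ nb G U y <;>
        simp only [c1, c2, if_true, if_false, not_false_iff] at hdec ⊢ <;>
        push_cast <;> exact_mod_cast hdec
    have hmain := hyp6C x y hxy
    have step : (w x * w y) * (eb G (nb G U x) (nb G U y) : ℝ)
        ≤ (w x * w y) * ((if y ∈ nb G U x then (dg G U y : ℝ) else 0)
          + (if x ∈ nb G U y then (dg G U x : ℝ) else 0)
          + 6 * C * ((dg G U x + dg G U y : ℕ) : ℝ) ^ (2 - α)) := by
      apply mul_le_mul_of_nonneg_left _ hwxy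
      exact le_trans hdecR (by linarith)
    refine le_trans step ?_
    rw [mul_add, mul_add]
    have e1 : (w x * w y) * (if y ∈ nb G U x then (dg G U y : ℝ) else 0)
        ≤ (if y ∈ nb G U x then w x else 0) := by
      split_ifs with hcase
      · refine le_of_eq ?_
        have h : (w x * w y) * (dg G U y : ℝ) = w x * (w y * (dg G U y : ℝ)) := by ring
        rw [h, hwd y hyU, mul_one]
      · rw [mul_zero]
    have e2 : (w x * w y) * (if x ∈ nb G U y then (dg G U x : ℝ) else 0)
        ≤ (if x ∈ nb G U y then w y else 0) := by
      split_ifs with hcase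
      · refine le_of_eq ?_
        have h : (w x * w y) * (dg G U x : ℝ) = w y * (w x * (dg G U x : ℝ)) := by ring
        rw [h, hwd x hx, mul_one]
      · rw [mul_zero]
    linarith
  -- summing up
  set n' : ℝ := (U.card : ℝ) with hn'
  set S1 : ℝ := ∑ v ∈ U, (dg G U v : ℝ) with hS1
  have hsplit : ∀ x ∈ U, ∑ y ∈ U, (w x * w y) * (eb G (nb G U x) (nb G U y) : ℝ)
      = (w x * w x) * (eb G (nb G U x) (nb G U x) : ℝ)
        + ∑ y ∈ U.erase x, (w x * w y) * (eb G (nb G U x) (nb G U y) : ℝ) := by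
    intro x hx
    exact (Finset.add_sum_erase U _ hx).symm
  -- the three off-diagonal partial sums
  have hSA : ∀ x ∈ U, ∑ y ∈ U.erase x, (if y ∈ nb G U x then w x else 0) = (dg G U x : ℝ) * w x := by
    intro x hx
    rw [Finset.sum_ite_mem]
    have : U.erase x ∩ nb G U x = nb G U x :=
      Finset.inter_eq_right.mpr (nb_subset_erase G U x)
    rw [this, Finset.sum_const, nsmul_eq_mul]
    rfl
  have hSB : ∀ x ∈ U, ∑ y ∈ U.erase x, (if x ∈ nb G U y then w y else 0)
      = ∑ y ∈ nb G U x, w y := by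
    intro x hx
    have hcongr : ∀ y ∈ U.erase x, (if x ∈ nb G U y then w y else 0)
        = (if y ∈ nb G U x then w y else 0) := by
      intro y hy
      have hyU : y ∈ U := Finset.mem_of_mem_erase hy
      have : (x ∈ nb G U y) ↔ (y ∈ nb G U x) := by
        rw [mem_nb, mem_nb]
        constructor
        · rintro ⟨_, h⟩; exact ⟨hyU, G.adj_comm y x |>.mp h⟩
        · rintro ⟨_, h⟩; exact ⟨hx, G.adj_comm x y |>.mp h⟩
      simp only [this]
    rw [Finset.sum_congr rfl hcongr, Finset.sum_ite_mem]
    congr 1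
    exact Finset.inter_eq_right.mpr (nb_subset_erase G U x)
  have hSC : ∑ x ∈ U, ∑ y ∈ U.erase x,
      (w x * w y) * (6 * C * ((dg G U x + dg G U y : ℕ) : ℝ) ^ (2 - α))
      ≤ 48 * C * (D ^ (-α) * S1) * (n' * D⁻¹) := by
    have hterm_nonneg : ∀ x ∈ U, ∀ y ∈ U,
        0 ≤ (w x * w y) * (6 * C * ((dg G U x + dg G U y : ℕ) : ℝ) ^ (2 - α)) := by
      intro x hx y hy
      have := mul_pos (hwpos x hx) (hwpos y hy)
      have h2 : (0:ℝ) ≤ ((dg G U x + dg G U y : ℕ) : ℝ) ^ (2 - α) :=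
        Real.rpow_nonneg (by positivity) _
      positivity
    have hext : ∑ x ∈ U, ∑ y ∈ U.erase x,
        (w x * w y) * (6 * C * ((dg G U x + dg G U y : ℕ) : ℝ) ^ (2 - α))
        ≤ ∑ x ∈ U, ∑ y ∈ U,
        (w x * w y) * (6 * C * ((dg G U x + dg G U y : ℕ) : ℝ) ^ (2 - α)) := by
      apply Finset.sum_le_sum
      intro x hx
      apply Finset.sum_le_sum_of_subset_of_nonneg (Finset.erase_subset _ _)
      intro y hy _
      exact hterm_nonneg x hx y hy
    refine le_trans hext ?_
    have hpt : ∀ x ∈ U, ∀ y ∈ U,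
        (w x * w y) * (6 * C * ((dg G U x + dg G U y : ℕ) : ℝ) ^ (2 - α))
        ≤ 24 * C * ((w x * ((dg G U x:ℝ) ^ (2-α))) * w y + w x * (w y * ((dg G U y:ℝ) ^ (2-α)))) := by
      intro x hx y hy
      have hcast : ((dg G U x + dg G U y : ℕ) : ℝ) = (dg G U x : ℝ) + (dg G U y : ℝ) := by
        push_cast; ring
      rw [hcast]
      have hbd := rpow_add_le (dg G U x : ℝ) (dg G U y : ℝ) (2 - α)
        (by positivity) (by positivity) (by linarith) (by linarith)
      have hwx := (hwpos x hx).le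
      have hwy := (hwpos y hy).le
      have hwxy : 0 ≤ w x * w y := mul_nonneg hwx hwy
      calc (w x * w y) * (6 * C * ((dg G U x:ℝ) + (dg G U y:ℝ)) ^ (2 - α))
          ≤ (w x * w y) * (6 * C * (4 * ((dg G U x:ℝ) ^ (2-α) + (dg G U y:ℝ) ^ (2-α)))) := by
            apply mul_le_mul_of_nonneg_left _ hwxy
            apply mul_le_mul_of_nonneg_left hbd (by positivity)
        _ = 24 * C * ((w x * ((dg G U x:ℝ) ^ (2-α))) * w y
              + w x * (w y * ((dg G U y:ℝ) ^ (2-α)))) := by ring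
    have hsum2 : ∑ x ∈ U, ∑ y ∈ U,
        (w x * w y) * (6 * C * ((dg G U x + dg G U y : ℕ) : ℝ) ^ (2 - α))
        ≤ 24 * C * ((∑ x ∈ U, w x * ((dg G U x:ℝ) ^ (2-α))) * (∑ y ∈ U, w y)
            + (∑ x ∈ U, w x) * (∑ y ∈ U, w y * ((dg G U y:ℝ) ^ (2-α)))) := by
      have h := Finset.sum_le_sum (fun x hx => Finset.sum_le_sum (fun y hy => hpt x hx y hy))
      refine le_trans h (le_of_eq ?_)
      exact sum_expand U (fun x => w x * ((dg G U x:ℝ) ^ (2-α))) w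
        (fun y => w y * ((dg G U y:ℝ) ^ (2-α))) w (24 * C)
    refine le_trans hsum2 ?_
    -- bound the two factors
    have hf1 : ∑ x ∈ U, w x * ((dg G U x:ℝ) ^ (2-α)) ≤ D ^ (-α) * S1 := by
      rw [hS1, Finset.mul_sum]
      apply Finset.sum_le_sum
      intro x hx
      have := aux_weight (α := α) (dg G U x : ℝ) D hD0 (hminD x hx) hα0
      rw [hw]
      calc ((dg G U x:ℝ))⁻¹ * ((dg G U x:ℝ) ^ (2-α)) ≤ (dg G U x:ℝ) * D ^ (-α) := this
        _ = D ^ (-α) * (dg G U x:ℝ) := by ring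
    have hf2 : ∑ x ∈ U, w x ≤ n' * D⁻¹ := by
      rw [hn']
      calc ∑ x ∈ U, w x ≤ ∑ x ∈ U, D⁻¹ := by
            apply Finset.sum_le_sum
            intro x hx
            exact inv_anti₀ hD0 (hminD x hx)
        _ = (U.card : ℝ) * D⁻¹ := by rw [Finset.sum_const, nsmul_eq_mul]
    have hnn1 : 0 ≤ ∑ x ∈ U, w x * ((dg G U x:ℝ) ^ (2-α)) := by
      apply Finset.sum_nonneg
      intro x hx
      have := (hwpos x hx).le
      have h2 : (0:ℝ) ≤ (dg G U x:ℝ) ^ (2-α) := Real.rpow_nonneg (by positivity) _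
      positivity
    have hnn2 : 0 ≤ ∑ x ∈ U, w x := Finset.sum_nonneg (fun x hx => (hwpos x hx).le)
    have hS1nn : (0:ℝ) ≤ S1 := by
      rw [hS1]
      apply Finset.sum_nonneg
      intro v _
      positivity
    have hD1 : (0:ℝ) ≤ D ^ (-α) * S1 := by
      have : (0:ℝ) ≤ D ^ (-α) := Real.rpow_nonneg hD0.le _
      positivity
    have hprod : (∑ x ∈ U, w x * ((dg G U x:ℝ) ^ (2-α))) * (∑ y ∈ U, w y)
        ≤ (D ^ (-α) * S1) * (n' * D⁻¹) :=
      mul_le_mul hf1 hf2 hnn2 hD1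
    nlinarith [hprod, hC]
  -- put everything together
  calc ∑ x ∈ U, ∑ y ∈ U, (w x * w y) * (eb G (nb G U x) (nb G U y) : ℝ)
      = ∑ x ∈ U, ((w x * w x) * (eb G (nb G U x) (nb G U x) : ℝ)
        + ∑ y ∈ U.erase x, (w x * w y) * (eb G (nb G U x) (nb G U y) : ℝ)) :=
        Finset.sum_congr rfl hsplit
    _ ≤ ∑ x ∈ U, (1 + ((dg G U x : ℝ) * w x + ∑ y ∈ nb G U x, w y
          + ∑ y ∈ U.erase x, (w x * w y) * (6 * C * ((dg G U x + dg G U y : ℕ) : ℝ) ^ (2 - α)))) := by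
        apply Finset.sum_le_sum
        intro x hx
        have h1 := hdiag x hx
        have h2 : ∑ y ∈ U.erase x, (w x * w y) * (eb G (nb G U x) (nb G U y) : ℝ)
            ≤ (dg G U x : ℝ) * w x + ∑ y ∈ nb G U x, w y
              + ∑ y ∈ U.erase x, (w x * w y) * (6 * C * ((dg G U x + dg G U y : ℕ) : ℝ) ^ (2 - α)) := by
          calc ∑ y ∈ U.erase x, (w x * w y) * (eb G (nb G U x) (nb G U y) : ℝ)
              ≤ ∑ y ∈ U.erase x, ((if y ∈ nb G U x then w x else 0)
                + (if x ∈ nb G U y then w y else 0)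
                + (w x * w y) * (6 * C * ((dg G U x + dg G U y : ℕ) : ℝ) ^ (2 - α))) :=
                Finset.sum_le_sum (fun y hy => hoff x hx y hy)
            _ = (dg G U x : ℝ) * w x + ∑ y ∈ nb G U x, w y
                + ∑ y ∈ U.erase x, (w x * w y) * (6 * C * ((dg G U x + dg G U y : ℕ) : ℝ) ^ (2 - α)) := by
                rw [Finset.sum_add_distrib, Finset.sum_add_distrib, hSA x hx, hSB x hx]
        linarith
    _ = (U.card : ℝ) + (∑ x ∈ U, (dg G U x : ℝ) * w x) + (∑ x ∈ U, ∑ y ∈ nb G U x, w y)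
          + ∑ x ∈ U, ∑ y ∈ U.erase x, (w x * w y) * (6 * C * ((dg G U x + dg G U y : ℕ) : ℝ) ^ (2 - α)) := by
        rw [Finset.sum_add_distrib, Finset.sum_add_distrib, Finset.sum_add_distrib,
          Finset.sum_const, nsmul_eq_mul, mul_one]
        ring
    _ ≤ (U.card : ℝ) + (U.card : ℝ) + (U.card : ℝ)
          + 48 * C * (D ^ (-α) * S1) * (n' * D⁻¹) := by
        have hone : ∀ x ∈ U, (dg G U x : ℝ) * w x = (1:ℝ) := by
          intro x hx
          rw [mul_comm]
          exact hwd x hx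
        have hA : ∑ x ∈ U, (dg G U x : ℝ) * w x = (U.card : ℝ) := by
          rw [Finset.sum_congr rfl hone, Finset.sum_const, nsmul_eq_mul, mul_one]
        have hB : ∑ x ∈ U, ∑ y ∈ nb G U x, w y = (U.card : ℝ) := by
          rw [sum_nb G U w, Finset.sum_congr rfl hone, Finset.sum_const, nsmul_eq_mul, mul_one]
        rw [hA, hB]
        linarith [hSC]
    _ = 3 * U.card + (48 * C * (D ^ (-α) * S1) * (U.card * D⁻¹)) := by
      rw [hn']
      ring

lemma key_lemma (hα0 : 0 ≤ α) (hα2 : α < 2) (hC : 0 < C) (U : Finset V) (D : ℝ)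
    (hD6 : 6 < D)
    (hcard : 96 * C * U.card ≤ D ^ (1+α))
    (hyp6C : ∀ u v : V, u ≠ v →
      (eb G ((nb G U u).erase v) ((nb G U v).erase u) : ℝ)
        ≤ 6 * C * ((dg G U u + dg G U v : ℕ) : ℝ) ^ (2 - α))
    (hminD : ∀ v ∈ U, D < (dg G U v : ℝ)) :
    U = ∅ := by
  by_contra hne
  have hUne : U.Nonempty := Finset.nonempty_iff_ne_empty.mpr hne
  have hD0 : (0:ℝ) < D := by linarith
  have hmin1 : ∀ v ∈ U, 1 ≤ dg G U v := by
    intro v hv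
    have h1 := hminD v hv
    have h2 : (1:ℝ) ≤ (dg G U v : ℝ) := by linarith
    exact_mod_cast h2
  set S1 : ℝ := ∑ v ∈ U, (dg G U v : ℝ) with hS1def
  have hS1nn : (0:ℝ) ≤ S1 := by
    rw [hS1def]
    apply Finset.sum_nonneg
    intro v _
    positivity
  -- lower bound
  have hlow : S1 ≤ ∑ x ∈ U, ∑ y ∈ U,
      (((dg G U x : ℝ))⁻¹ * ((dg G U y : ℝ))⁻¹) * (eb G (nb G U x) (nb G U y) : ℝ) := by
    have h1 := lower_bound G U hmin1
    have h2 := reindex G U (fun u => ((dg G U u : ℝ))⁻¹)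
    have h3 : ∑ a ∈ U, ∑ b ∈ nb G U a, sw G U a * sw G U b
        = ∑ a ∈ U, ∑ b ∈ nb G U a,
          (∑ x ∈ nb G U a, ((dg G U x : ℝ))⁻¹) * (∑ y ∈ nb G U b, ((dg G U y : ℝ))⁻¹) := rfl
    rw [hS1def]
    calc ∑ v ∈ U, (dg G U v : ℝ) ≤ ∑ a ∈ U, ∑ b ∈ nb G U a, sw G U a * sw G U b := h1
      _ = _ := by rw [h3, h2]
  -- upper bound
  have hup := upper_bound G hα0 hα2 hC U D hD0 hyp6C (fun v hv => (hminD v hv).le)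
  -- numeric conclusion
  have hS1D : D * (U.card : ℝ) ≤ S1 := by
    rw [hS1def]
    calc D * (U.card : ℝ) = ∑ _v ∈ U, D := by rw [Finset.sum_const, nsmul_eq_mul]; ring
      _ ≤ ∑ v ∈ U, (dg G U v : ℝ) := Finset.sum_le_sum (fun v hv => (hminD v hv).le)
  have hpow_pos : (0:ℝ) < D ^ (1+α) := Real.rpow_pos_of_pos hD0 _
  have hDpow : D ^ (-α) * D⁻¹ = (D ^ (1+α))⁻¹ := by
    rw [← Real.rpow_neg_one D, ← Real.rpow_add hD0, ← Real.rpow_neg hD0.le]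
    congr 1
    ring
  have hfrac : 48 * C * (D ^ (-α) * S1) * ((U.card : ℝ) * D⁻¹) ≤ S1 / 2 := by
    have heq : 48 * C * (D ^ (-α) * S1) * ((U.card : ℝ) * D⁻¹)
        = S1 * ((48 * C * (U.card : ℝ)) * (D ^ (-α) * D⁻¹)) := by ring
    rw [heq, hDpow]
    have hle : (48 * C * (U.card : ℝ)) * (D ^ (1+α))⁻¹ ≤ 1/2 := by
      rw [mul_inv_le_iff₀ hpow_pos]
      linarith
    calc S1 * ((48 * C * (U.card : ℝ)) * (D ^ (1+α))⁻¹) ≤ S1 * (1/2) :=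
        mul_le_mul_of_nonneg_left hle hS1nn
      _ = S1 / 2 := by ring
  have hfinal : S1 ≤ 3 * (U.card : ℝ) + S1 / 2 := le_trans hlow (le_trans hup (by linarith))
  have hS6 : S1 ≤ 6 * (U.card : ℝ) := by linarith
  have hcard_pos : (0:ℝ) < (U.card : ℝ) := by
    have := Finset.card_pos.mpr hUne
    exact_mod_cast this
  nlinarith


end Stmt0Aux

theorem stmt0 (α C : ℝ) (hα0 : 0 ≤ α) (hα2 : α < 2) (hC : 0 < C) :
    ∃ C' : ℝ, 0 < C' ∧
      ∀ (V : Type) [Fintype V] (G : SimpleGraph V),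
        (∀ u v : V, u ≠ v → ∀ U W : Set V,
            U ⊆ G.neighborSet u \ {v} → W ⊆ G.neighborSet v \ {u} → Disjoint U W →
            (edgesBetween G U W : ℝ) ≤ C * ((U.ncard + W.ncard : ℕ) : ℝ) ^ (2 - α)) →
        (G.edgeSet.ncard : ℝ) ≤ C' * (Fintype.card V : ℝ) ^ (2 - α / (α + 1)) := by
  classical
  refine ⟨96 * C + 7, by linarith, ?_⟩
  intro V _ G hyp
  have h1α : (0:ℝ) < 1 + α := by linarith
  set n : ℕ := Fintype.card V with hn
  have hedge : (G.edgeSet.ncard : ℝ) = (G.edgeFinset.card : ℝ) := by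
    norm_cast
    rw [Set.ncard_eq_toFinset_card']
    congr 1
  set m : ℕ := G.edgeFinset.card with hm
  set t : ℝ := 1 / (1 + α) with ht
  have ht0 : 0 ≤ t := by rw [ht]; positivity
  have ht1 : t ≤ 1 := by
    rw [ht, div_le_one h1α]
    linarith
  set e : ℝ := 2 - α / (α + 1) with he
  have het : t + 1 = e := by
    rw [ht, he]
    field_simp
    ring
  have h1e : (1:ℝ) ≤ e := by
    have hd1 : α / (α + 1) ≤ 1 := by
      rw [div_le_one (by linarith)]
      linarith
    rw [he]
    linarith
  have he0 : (0:ℝ) < e := by linarith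
  by_cases hn0 : n = 0
  · -- no vertices: no edges
    have huniv : (Finset.univ : Finset V) = ∅ := by
      apply Finset.card_eq_zero.mp
      rw [Finset.card_univ]
      exact hn0
    have hm0 : m = 0 := by
      have hs := SimpleGraph.sum_degrees_eq_twice_card_edges G
      rw [huniv, Finset.sum_empty] at hs
      omega
    rw [hedge, hm0, hn0]
    push_cast
    rw [Real.zero_rpow (ne_of_gt he0)]
    norm_num
  · have hn1 : 1 ≤ n := Nat.one_le_iff_ne_zero.mpr hn0
    have hnR : (1:ℝ) ≤ (n:ℝ) := by exact_mod_cast hn1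
    have hnpos : (0:ℝ) < (n:ℝ) := by linarith
    set R : ℝ := (96 * C * n) ^ t with hR
    have hRnn : (0:ℝ) ≤ R := Real.rpow_nonneg (by positivity) _
    have hR0 : (0:ℝ) < R := Real.rpow_pos_of_pos (by positivity) _
    set D : ℝ := 6 + R with hD
    have hD6 : (6:ℝ) < D := by rw [hD]; linarith
    have hD0 : (0:ℝ) < D := by linarith
    have hclaim : (m:ℝ) ≤ D * n := by
      by_contra hcon
      push_neg at hcon
      have hdeg : ∀ v : V, Stmt0Aux.dg G Finset.univ v = G.degree v := by
        intro v
        have hnbv : Stmt0Aux.nb G Finset.univ v = G.neighborFinset v := by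
          ext u
          simp [Stmt0Aux.mem_nb, SimpleGraph.mem_neighborFinset]
        unfold Stmt0Aux.dg
        rw [hnbv]
        rfl
      have hsumN : ∑ v ∈ Finset.univ, Stmt0Aux.dg G Finset.univ v = 2 * m := by
        rw [Finset.sum_congr rfl (fun v _ => hdeg v)]
        exact SimpleGraph.sum_degrees_eq_twice_card_edges G
      have hsum : ∑ v ∈ Finset.univ, (Stmt0Aux.dg G Finset.univ v : ℝ) = 2 * (m:ℝ) := by
        exact_mod_cast congrArg (Nat.cast : ℕ → ℝ) hsumN
      have hdegen := Stmt0Aux.degen G D Finset.univ (by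
        rw [hsum]
        have hcu : (((Finset.univ : Finset V)).card : ℝ) = (n : ℝ) := by
          rw [Finset.card_univ, hn]
        rw [hcu]
        linarith)
      obtain ⟨W, hWsub, hWne, hWmin⟩ := hdegen
      have hcard96 : 96 * C * W.card ≤ D ^ (1+α) := by
        have hWn : (W.card : ℝ) ≤ (n:ℝ) := by
          have h1 : W.card ≤ Fintype.card V := Finset.card_le_univ W
          have h2 : W.card ≤ n := by rw [hn]; exact h1
          exact_mod_cast h2
        have hRpow : R ^ (1+α) = 96 * C * n := by
          rw [hR, ← Real.rpow_mul (by positivity)]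
          have : t * (1+α) = 1 := by
            rw [ht]
            field_simp
          rw [this, Real.rpow_one]
        calc 96 * C * W.card ≤ 96 * C * n := by nlinarith
          _ = R ^ (1+α) := hRpow.symm
          _ ≤ D ^ (1+α) := Real.rpow_le_rpow hRnn (by rw [hD]; linarith) (by linarith)
      have hempty := Stmt0Aux.key_lemma G hα0 hα2 hC W D hD6 hcard96
        (fun u v huv => Stmt0Aux.Nstar_bound G hyp hα2 hC W huv) hWmin
      rw [hempty] at hWne
      exact Finset.not_nonempty_empty hWne
    -- final computation
    have h96 : (96 * C) ^ t ≤ 96 * C + 1 := by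
      rcases le_total 1 (96 * C) with hc | hc
      · calc (96 * C) ^ t ≤ (96 * C) ^ (1:ℝ) := Real.rpow_le_rpow_of_exponent_le hc ht1
          _ = 96 * C := Real.rpow_one _
          _ ≤ 96 * C + 1 := by linarith
      · calc (96 * C) ^ t ≤ 1 := Real.rpow_le_one (by positivity) hc ht0
          _ ≤ 96 * C + 1 := by nlinarith
    have hsplitR : R = (96 * C) ^ t * (n:ℝ) ^ t := by
      rw [hR, Real.mul_rpow (by positivity) (by positivity)]
    have hnt : (n:ℝ) ^ t * (n:ℝ) = (n:ℝ) ^ e := by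
      calc (n:ℝ) ^ t * (n:ℝ) = (n:ℝ) ^ t * (n:ℝ) ^ (1:ℝ) := by rw [Real.rpow_one]
        _ = (n:ℝ) ^ (t + 1) := (Real.rpow_add hnpos t 1).symm
        _ = (n:ℝ) ^ e := by rw [het]
    have hne_nn : (0:ℝ) ≤ (n:ℝ) ^ e := Real.rpow_nonneg (by positivity) _
    have hn_le : (n:ℝ) ≤ (n:ℝ) ^ e := by
      calc (n:ℝ) = (n:ℝ) ^ (1:ℝ) := (Real.rpow_one _).symm
        _ ≤ (n:ℝ) ^ e := Real.rpow_le_rpow_of_exponent_le hnR h1e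
    have hnt_nn : (0:ℝ) ≤ (n:ℝ) ^ t := Real.rpow_nonneg (by positivity) _
    calc (G.edgeSet.ncard : ℝ) = (m:ℝ) := by rw [hedge]
      _ ≤ D * n := hclaim
      _ = 6 * (n:ℝ) + (96 * C) ^ t * ((n:ℝ) ^ t * (n:ℝ)) := by rw [hD, hsplitR]; ring
      _ ≤ 6 * (n:ℝ) ^ e + (96 * C + 1) * (n:ℝ) ^ e := by
          have hmain : (96 * C) ^ t * ((n:ℝ) ^ t * (n:ℝ)) ≤ (96 * C + 1) * (n:ℝ) ^ e := by
            rw [hnt]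
            exact mul_le_mul_of_nonneg_right h96 hne_nn
          linarith
      _ = (96 * C + 7) * (n:ℝ) ^ e := by ring
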